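/- The SG mechanism is group strategy-proof against any coalition S with min_j q_j ≥ Σ_{i∈S} r_i: if agents outside S bid truthfully, then for any bids of the agents in S producing allocation a^σ ≠ a^π, some agent i ∈ S strictly lexicographic-prefers a^π_{i*} to a^σ_{i*}. -/

import Mathlib

open Finset

/-- Agent lexicographic-prefers share `a` to share `b` w.r.t. preference
permutation `π` (where `π ℓ` is the `ℓ`-th most preferred good): the leftmost
nonzero coordinate of the sorted difference is positive. -/
def LexPref {m : ℕ} (π : Equiv.Perm (Fin m)) (a b : Fin m → ℝ) : Prop :=
  ∃ k : Fin m, (∀ l, l < k → a (π l) = b (π l)) ∧ b (π k) < a (π k)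

/-- A feasible allocation: nonnegative, row sums `r i`, column sums `q j`. -/
def IsAlloc {n m : ℕ} (q : Fin m → ℝ) (r : Fin n → ℝ)
    (a : Fin n → Fin m → ℝ) : Prop :=
  (∀ i j, 0 ≤ a i j) ∧ (∀ i, ∑ j, a i j = r i) ∧ (∀ j, ∑ i, a i j = q j)

/-- Time at which agent `i` starts consuming good `j` under bids `σ`, given the
exhaustion times `T`: the latest exhaustion time among goods `i` bids before `j`. -/
def startTime {n m : ℕ} (σ : Fin n → Equiv.Perm (Fin m)) (T : Fin m → ℝ)
    (i : Fin n) (j : Fin m) : ℝ :=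
  (Finset.univ.filter (fun j' => (σ i).symm j' < (σ i).symm j)).fold max 0 T

/-- The Synchronized Greedy allocation with exhaustion times `T` under bids `σ`:
each agent consumes her most-preferred unexhausted good at constant rate `r i`
from time 0 to time 1, and each good `j` is fully consumed at time `T j`. -/
def IsSGAllocT {n m : ℕ} (q : Fin m → ℝ) (r : Fin n → ℝ)
    (σ : Fin n → Equiv.Perm (Fin m)) (T : Fin m → ℝ)
    (a : Fin n → Fin m → ℝ) : Prop :=
  (∀ j, 0 ≤ T j ∧ T j ≤ 1) ∧
  (∀ i j, a i j = r i * max 0 (T j - startTime σ T i j)) ∧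
  (∀ j, ∑ i, a i j = q j)

/-- `a` is the allocation produced by the SG mechanism under bids `σ`. -/
def IsSGAlloc {n m : ℕ} (q : Fin m → ℝ) (r : Fin n → ℝ)
    (σ : Fin n → Equiv.Perm (Fin m)) (a : Fin n → Fin m → ℝ) : Prop :=
  ∃ T, IsSGAllocT q r σ T a

private lemma max0_sub (a b : ℝ) : max 0 (a - b) = max a b - b := by
  rcases le_total a b with h | h
  · have h1 : a - b ≤ 0 := by linarith
    rw [max_eq_left h1, max_eq_right h]; ring
  · have h1 : (0:ℝ) ≤ a - b := by linarith
    rw [max_eq_right h1, max_eq_left h]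

private lemma zero_le_fold {α : Type*} (s : Finset α) (f : α → ℝ) :
    (0:ℝ) ≤ s.fold max 0 f := by
  classical
  induction s using Finset.induction_on with
  | empty => simp
  | insert _ _ h ih => rw [Finset.fold_insert h]; exact le_trans ih (le_max_right _ _)

private lemma le_fold_of_mem {α : Type*} {s : Finset α} {f : α → ℝ} {x : α}
    (hx : x ∈ s) : f x ≤ s.fold max 0 f := by
  classical
  revert hx
  induction s using Finset.induction_on with
  | empty => intro hx; simp at hx
  | insert _ _ h ih =>
    intro hx
    rw [Finset.fold_insert h]
    rcases Finset.mem_insert.1 hx with rfl | hx'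
    · exact le_max_left _ _
    · exact le_trans (ih hx') (le_max_right _ _)

private lemma fold_max_le' {α : Type*} {s : Finset α} {f : α → ℝ} {c : ℝ}
    (h0 : 0 ≤ c) (h : ∀ x ∈ s, f x ≤ c) : s.fold max 0 f ≤ c := by
  classical
  revert h
  induction s using Finset.induction_on with
  | empty => intro _; simpa using h0
  | insert _ _ hmem ih =>
    intro h
    rw [Finset.fold_insert hmem]
    exact max_le (h _ (Finset.mem_insert_self _ _))
      (ih fun x hx => h x (Finset.mem_insert_of_mem hx))

/-- Telescoping upper bound: the total consumption of any set `G` of goods by an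
agent with rate `c` is at most `c * max(0, max_{j ∈ G} T j)`. -/
private lemma sum_le_fold {m : ℕ} (e : Equiv.Perm (Fin m)) (T : Fin m → ℝ)
    (c : ℝ) (hc : 0 ≤ c) :
    ∀ G : Finset (Fin m),
      (∑ j ∈ G, c * max 0 (T j -
        (Finset.univ.filter (fun j' => e.symm j' < e.symm j)).fold max 0 T))
        ≤ c * G.fold max 0 T := by
  intro G
  induction G using Finset.strongInduction with
  | _ G ih =>
    rcases G.eq_empty_or_nonempty with rfl | hGne
    · simp
    · obtain ⟨j0, hj0G, hj0max⟩ := G.exists_max_image (fun j => e.symm j) hGne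
      have hni : j0 ∉ G.erase j0 := Finset.notMem_erase _ _
      have ih' := ih _ (Finset.erase_ssubset hj0G)
      have hst : (G.erase j0).fold max 0 T ≤
          (Finset.univ.filter (fun j' => e.symm j' < e.symm j0)).fold max 0 T := by
        apply fold_max_le' (zero_le_fold _ _)
        intro x hx
        have hxG : x ∈ G := Finset.mem_of_mem_erase hx
        have hxne : x ≠ j0 := Finset.ne_of_mem_erase hx
        have hlt : e.symm x < e.symm j0 :=
          lt_of_le_of_ne (hj0max x hxG) (fun h => hxne (e.symm.injective h))
        exact le_fold_of_mem (Finset.mem_filter.2 ⟨Finset.mem_univ _, hlt⟩)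
      have h2 : c * max 0 (T j0 -
          (Finset.univ.filter (fun j' => e.symm j' < e.symm j0)).fold max 0 T)
          ≤ c * (max (T j0) ((G.erase j0).fold max 0 T) - (G.erase j0).fold max 0 T) := by
        apply mul_le_mul_of_nonneg_left _ hc
        rw [← max0_sub]
        refine max_le (le_max_left _ _) ?_
        refine le_max_of_le_right ?_
        linarith
      have hsum : (∑ j ∈ G, c * max 0 (T j -
          (Finset.univ.filter (fun j' => e.symm j' < e.symm j)).fold max 0 T))
          = c * max 0 (T j0 -
            (Finset.univ.filter (fun j' => e.symm j' < e.symm j0)).fold max 0 T)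
            + ∑ j ∈ G.erase j0, c * max 0 (T j -
              (Finset.univ.filter (fun j' => e.symm j' < e.symm j)).fold max 0 T) := by
        conv_lhs => rw [← Finset.insert_erase hj0G]
        rw [Finset.sum_insert hni]
      have hfold : G.fold max 0 T = max (T j0) ((G.erase j0).fold max 0 T) := by
        conv_lhs => rw [← Finset.insert_erase hj0G]
        rw [Finset.fold_insert hni]
      have hexp : c * (max (T j0) ((G.erase j0).fold max 0 T) - (G.erase j0).fold max 0 T)
          = c * max (T j0) ((G.erase j0).fold max 0 T) - c * ((G.erase j0).fold max 0 T) := by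
        ring
      rw [hsum, hfold]
      linarith

/-- Telescoping equality on an `e`-lower set of goods: a greedy (truthful) agent
with rate `c` consumes exactly `c * max(0, max_{j ∈ G} T j)` from such a set. -/
private lemma sum_eq_fold {m : ℕ} (e : Equiv.Perm (Fin m)) (T : Fin m → ℝ) (c : ℝ) :
    ∀ G : Finset (Fin m), (∀ j ∈ G, ∀ j', e.symm j' < e.symm j → j' ∈ G) →
      (∑ j ∈ G, c * max 0 (T j -
        (Finset.univ.filter (fun j' => e.symm j' < e.symm j)).fold max 0 T))
        = c * G.fold max 0 T := by
  intro G
  induction G using Finset.strongInduction with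
  | _ G ih =>
    intro hlow
    rcases G.eq_empty_or_nonempty with rfl | hGne
    · simp
    · obtain ⟨j0, hj0G, hj0max⟩ := G.exists_max_image (fun j => e.symm j) hGne
      have hni : j0 ∉ G.erase j0 := Finset.notMem_erase _ _
      have hset : Finset.univ.filter (fun j' => e.symm j' < e.symm j0) = G.erase j0 := by
        ext j'
        simp only [Finset.mem_filter, Finset.mem_univ, true_and, Finset.mem_erase]
        constructor
        · intro h
          refine ⟨fun hh => absurd h ?_, hlow j0 hj0G j' h⟩
          rw [hh]; exact lt_irrefl _
        · rintro ⟨hne, hmem⟩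
          exact lt_of_le_of_ne (hj0max _ hmem) (fun h => hne (e.symm.injective h))
      have hlow' : ∀ j ∈ G.erase j0, ∀ j', e.symm j' < e.symm j → j' ∈ G.erase j0 := by
        intro j hj j' hj'
        have hjG : j ∈ G := Finset.mem_of_mem_erase hj
        have h1 : j' ∈ G := hlow j hjG j' hj'
        have hlt : e.symm j' < e.symm j0 := lt_of_lt_of_le hj' (hj0max j hjG)
        exact Finset.mem_erase.2 ⟨fun hh => absurd hlt (by rw [hh]; exact lt_irrefl _), h1⟩
      have h1 : (∑ j ∈ G.erase j0, c * max 0 (T j -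
          (Finset.univ.filter (fun j' => e.symm j' < e.symm j)).fold max 0 T))
          = c * ((G.erase j0).fold max 0 T) := ih _ (Finset.erase_ssubset hj0G) hlow'
      have hsum : (∑ j ∈ G, c * max 0 (T j -
          (Finset.univ.filter (fun j' => e.symm j' < e.symm j)).fold max 0 T))
          = c * max 0 (T j0 -
            (Finset.univ.filter (fun j' => e.symm j' < e.symm j0)).fold max 0 T)
            + ∑ j ∈ G.erase j0, c * max 0 (T j -
              (Finset.univ.filter (fun j' => e.symm j' < e.symm j)).fold max 0 T) := by
        conv_lhs => rw [← Finset.insert_erase hj0G]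
        rw [Finset.sum_insert hni]
      have hfold : G.fold max 0 T = max (T j0) ((G.erase j0).fold max 0 T) := by
        conv_lhs => rw [← Finset.insert_erase hj0G]
        rw [Finset.fold_insert hni]
      rw [hsum, h1, hfold, hset, max0_sub]
      ring

/-- Column comparison at a good `x` that is exhausted earlier in run 1 than in
run 2, earliest (w.r.t. `T1`) among such goods: some coalition member consumes
strictly less of `x` in run 2. -/
private lemma colLemma {n m : ℕ} (q : Fin m → ℝ) (r : Fin n → ℝ)
    (τ1 τ2 : Fin n → Equiv.Perm (Fin m)) (S : Finset (Fin n))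
    (hq : ∀ j, 0 < q j) (hr : ∀ i, 0 < r i)
    (hbig : ∀ j, ∑ i ∈ S, r i ≤ q j)
    (hagree : ∀ i ∉ S, τ1 i = τ2 i)
    (a1 a2 : Fin n → Fin m → ℝ) (T1 T2 : Fin m → ℝ)
    (hT1nn : ∀ j, 0 ≤ T1 j) (hT2 : ∀ j, T2 j ≤ 1)
    (h1a : ∀ i j, a1 i j = r i * max 0 (T1 j - startTime τ1 T1 i j))
    (h2a : ∀ i j, a2 i j = r i * max 0 (T2 j - startTime τ2 T2 i j))
    (h1q : ∀ j, ∑ i, a1 i j = q j) (h2q : ∀ j, ∑ i, a2 i j = q j)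
    (h1nn : ∀ i j, 0 ≤ a1 i j) (h2nn : ∀ i j, 0 ≤ a2 i j)
    (x : Fin m) (hx : T1 x < T2 x)
    (hxmin : ∀ j, T1 j < T2 j → T1 x ≤ T1 j) :
    ∃ i ∈ S, a2 i x < a1 i x := by
  classical
  have hT1x1 : T1 x < 1 := lt_of_lt_of_le hx (hT2 x)
  have hstep1 : ∀ i, i ∉ S → a1 i x ≤ a2 i x ∧ (0 < a1 i x → a1 i x < a2 i x) := by
    intro i hi
    have hbid : τ1 i = τ2 i := hagree i hi
    set A := Finset.univ.filter (fun j' => (τ1 i).symm j' < (τ1 i).symm x) with hA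
    have hs1 : startTime τ1 T1 i x = A.fold max 0 T1 := rfl
    have hs2 : startTime τ2 T2 i x = A.fold max 0 T2 := by
      simp only [startTime, ← hbid, hA]
    by_cases hpos : 0 < a1 i x
    · have h0 : 0 < max 0 (T1 x - A.fold max 0 T1) := by
        by_contra hmz
        push_neg at hmz
        have hz : max 0 (T1 x - A.fold max 0 T1) = 0 :=
          le_antisymm hmz (le_max_left _ _)
        rw [h1a i x, hs1, hz, mul_zero] at hpos
        exact lt_irrefl _ hpos
      have hsub : A.fold max 0 T1 < T1 x := by
        by_contra hge
        push_neg at hge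
        rw [max_eq_left (by linarith : T1 x - A.fold max 0 T1 ≤ 0)] at h0
        exact lt_irrefl _ h0
      have hQP : ∀ j' ∈ A, T2 j' ≤ T1 j' := by
        intro j' hj'
        have hPj' : T1 j' ≤ A.fold max 0 T1 := le_fold_of_mem hj'
        by_contra hlt
        push_neg at hlt
        exact absurd (hxmin j' hlt) (not_le.2 (lt_of_le_of_lt hPj' hsub))
      have hfle : A.fold max 0 T2 ≤ A.fold max 0 T1 :=
        fold_max_le' (zero_le_fold _ _)
          (fun j' hj' => le_trans (hQP j' hj') (le_fold_of_mem hj'))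
      have h1 : a1 i x = r i * (T1 x - A.fold max 0 T1) := by
        rw [h1a i x, hs1, max_eq_right (by linarith : (0:ℝ) ≤ T1 x - A.fold max 0 T1)]
      have h2 : r i * (T2 x - A.fold max 0 T1) ≤ a2 i x := by
        rw [h2a i x, hs2]
        refine mul_le_mul_of_nonneg_left ?_ (hr i).le
        have hh : T2 x - A.fold max 0 T1 ≤ T2 x - A.fold max 0 T2 := by linarith
        exact le_trans hh (le_max_right _ _)
      have h3 : r i * (T1 x - A.fold max 0 T1) < r i * (T2 x - A.fold max 0 T1) :=
        mul_lt_mul_of_pos_left (by linarith) (hr i)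
      constructor
      · linarith
      · intro _; linarith
    · push_neg at hpos
      have he : a1 i x = 0 := le_antisymm hpos (h1nn i x)
      refine ⟨by rw [he]; exact h2nn i x, ?_⟩
      intro hc; rw [he] at hc; exact absurd hc (lt_irrefl 0)
  have hstep2 : ∃ i, i ∉ S ∧ 0 < a1 i x := by
    by_contra h2
    push_neg at h2
    have hzero : ∀ i ∈ Finset.univ \ S, a1 i x = 0 := by
      intro i hi
      exact le_antisymm (h2 i (Finset.mem_sdiff.1 hi).2) (h1nn i x)
    have hsplit : ∑ i ∈ Finset.univ \ S, a1 i x + ∑ i ∈ S, a1 i x = ∑ i, a1 i x :=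
      Finset.sum_sdiff (Finset.subset_univ S)
    have hS0 : ∑ i ∈ Finset.univ \ S, a1 i x = 0 := Finset.sum_eq_zero hzero
    have hbound : ∑ i ∈ S, a1 i x ≤ (∑ i ∈ S, r i) * T1 x := by
      rw [Finset.sum_mul]
      refine Finset.sum_le_sum fun i _ => ?_
      rw [h1a i x]
      refine mul_le_mul_of_nonneg_left ?_ (hr i).le
      refine max_le (hT1nn x) ?_
      have hst : (0:ℝ) ≤ startTime τ1 T1 i x := zero_le_fold _ _
      linarith
    have hqx : q x = ∑ i ∈ S, a1 i x := by
      rw [← h1q x, ← hsplit, hS0, zero_add]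
    rcases S.eq_empty_or_nonempty with rfl | hSne
    · rw [Finset.sum_empty] at hqx
      exact absurd hqx.symm (ne_of_lt (hq x))
    · have hrpos : 0 < ∑ i ∈ S, r i := Finset.sum_pos (fun i _ => hr i) hSne
      have hqq : q x < q x := by
        calc q x = ∑ i ∈ S, a1 i x := hqx
          _ ≤ (∑ i ∈ S, r i) * T1 x := hbound
          _ < (∑ i ∈ S, r i) * 1 := mul_lt_mul_of_pos_left hT1x1 hrpos
          _ = ∑ i ∈ S, r i := mul_one _
          _ ≤ q x := hbig x
      exact lt_irrefl _ hqq
  by_contra h3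
  push_neg at h3
  obtain ⟨i0, hi0S, hi0pos⟩ := hstep2
  have hlt : ∑ i, a1 i x < ∑ i, a2 i x := by
    refine Finset.sum_lt_sum ?_ ⟨i0, Finset.mem_univ _, (hstep1 i0 hi0S).2 hi0pos⟩
    intro i _
    by_cases hi : i ∈ S
    · exact h3 i hi
    · exact (hstep1 i hi).1
  rw [h1q x, h2q x] at hlt
  exact lt_irrefl _ hlt

/-- Group strategy-proofness of SG against a coalition `S` with
`min_j q_j ≥ ∑_{i ∈ S} r_i`: if agents outside `S` bid truthfully and the
resulting allocation differs from the truthful one, then some agent of `S`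
strictly lexicographic-prefers her truthful allocation. -/
theorem sg_group_strategyproof {n m : ℕ} (q : Fin m → ℝ) (r : Fin n → ℝ)
    (π σ : Fin n → Equiv.Perm (Fin m)) (S : Finset (Fin n))
    (hq : ∀ j, 0 < q j) (hr : ∀ i, 0 < r i) (hsum : ∑ i, r i = ∑ j, q j)
    (hbig : ∀ j, ∑ i ∈ S, r i ≤ q j)
    (hσ : ∀ i ∉ S, σ i = π i)
    (aπ aσ : Fin n → Fin m → ℝ)
    (hAπ : IsAlloc q r aπ) (hπ : IsSGAlloc q r π aπ)
    (hAσ : IsAlloc q r aσ) (hσa : IsSGAlloc q r σ aσ)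
    (hne : aσ ≠ aπ) :
    ∃ i ∈ S, LexPref (π i) (aπ i) (aσ i) := by
  classical
  by_contra hcon
  push_neg at hcon
  obtain ⟨P, hP0, hPa, hPq⟩ := hπ
  obtain ⟨Q, hQ0, hQa, hQq⟩ := hσa
  -- First-difference lemma: a coalition member whose share changed must gain
  -- strictly at her first (true-preference-order) difference, and this forces
  -- the existence of a good `w`, among her top goods, finishing strictly later
  -- under the manipulation.
  have hFD : ∀ i ∈ S, aσ i ≠ aπ i →
      ∃ k w : Fin m, (∀ l, l < k → aσ i (π i l) = aπ i (π i l)) ∧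
        aπ i (π i k) < aσ i (π i k) ∧ P w < Q w ∧
        ∀ c : ℝ, 0 ≤ c → (∀ l, l ≤ k → P (π i l) ≤ c) → P w ≤ c := by
    intro i hiS hdiff
    obtain ⟨j0, hj0⟩ := Function.ne_iff.1 hdiff
    set F := Finset.univ.filter (fun k : Fin m => aσ i (π i k) ≠ aπ i (π i k)) with hF
    have hFne : F.Nonempty := ⟨(π i).symm j0, by
      simp only [hF, Finset.mem_filter, Finset.mem_univ, true_and, Equiv.apply_symm_apply]
      exact hj0⟩
    set k := F.min' hFne with hk
    have hkF : k ∈ F := F.min'_mem hFne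
    have hkne : aσ i (π i k) ≠ aπ i (π i k) := by
      simpa only [hF, Finset.mem_filter, Finset.mem_univ, true_and] using hkF
    have hpre : ∀ l, l < k → aσ i (π i l) = aπ i (π i l) := by
      intro l hl
      by_contra hne'
      have hkl : k ≤ l := F.min'_le l (by
        simp only [hF, Finset.mem_filter, Finset.mem_univ, true_and]; exact hne')
      exact absurd hkl (not_le.2 hl)
    have hgain : aπ i (π i k) < aσ i (π i k) := by
      rcases lt_or_gt_of_ne hkne with h | h
      · exact absurd ⟨k, fun l hl => (hpre l hl).symm, h⟩ (hcon i hiS)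
      · exact h
    set L := Finset.univ.filter (fun l : Fin m => l ≤ k) with hL
    set G := L.image (π i) with hG
    have hinj : ∀ x ∈ L, ∀ y ∈ L, π i x = π i y → x = y := fun x _ y _ h => (π i).injective h
    have hGlow : ∀ j ∈ G, ∀ j', (π i).symm j' < (π i).symm j → j' ∈ G := by
      intro j hj j' hj'
      obtain ⟨l, hlL, rfl⟩ := Finset.mem_image.1 hj
      rw [Equiv.symm_apply_apply] at hj'
      have hlk : l ≤ k := by
        simpa only [hL, Finset.mem_filter, Finset.mem_univ, true_and] using hlL
      refine Finset.mem_image.2 ⟨(π i).symm j', ?_, (π i).apply_symm_apply j'⟩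
      simp only [hL, Finset.mem_filter, Finset.mem_univ, true_and]
      exact le_of_lt (lt_of_lt_of_le hj' hlk)
    have hsumπ : ∑ j ∈ G, aπ i j = r i * G.fold max 0 P := by
      rw [← sum_eq_fold (π i) P (r i) G hGlow]
      refine Finset.sum_congr rfl fun j _ => ?_
      rw [hPa i j]
      rfl
    have hsumσ : ∑ j ∈ G, aσ i j ≤ r i * G.fold max 0 Q := by
      calc ∑ j ∈ G, aσ i j
          = ∑ j ∈ G, r i * max 0 (Q j -
              (Finset.univ.filter (fun j' => (σ i).symm j' < (σ i).symm j)).fold max 0 Q) := by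
            refine Finset.sum_congr rfl fun j _ => ?_
            rw [hQa i j]; rfl
        _ ≤ r i * G.fold max 0 Q := sum_le_fold (σ i) Q (r i) (hr i).le G
    have hlt : ∑ j ∈ G, aπ i j < ∑ j ∈ G, aσ i j := by
      rw [Finset.sum_image hinj, Finset.sum_image hinj]
      refine Finset.sum_lt_sum ?_ ⟨k, ?_, hgain⟩
      · intro l hl
        have hlk : l ≤ k := by
          simpa only [hL, Finset.mem_filter, Finset.mem_univ, true_and] using hl
        rcases lt_or_eq_of_le hlk with h | h
        · exact le_of_eq (hpre l h).symm
        · subst h; exact le_of_lt hgain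
      · simp only [hL, Finset.mem_filter, Finset.mem_univ, true_and, le_refl]
    have hfold : G.fold max 0 P < G.fold max 0 Q := by
      have h1 : r i * G.fold max 0 P < r i * G.fold max 0 Q := by
        calc r i * G.fold max 0 P = ∑ j ∈ G, aπ i j := hsumπ.symm
          _ < ∑ j ∈ G, aσ i j := hlt
          _ ≤ r i * G.fold max 0 Q := hsumσ
      exact lt_of_mul_lt_mul_left h1 (hr i).le
    obtain ⟨w, hwG, hwQ⟩ : ∃ w ∈ G, G.fold max 0 P < Q w := by
      by_contra hcc
      push_neg at hcc
      exact absurd hfold (not_lt.2 (fold_max_le' (zero_le_fold _ _) hcc))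
    have hwP : P w ≤ G.fold max 0 P := le_fold_of_mem hwG
    refine ⟨k, w, hpre, hgain, lt_of_le_of_lt hwP hwQ, ?_⟩
    intro c hc hbound
    refine le_trans hwP (fold_max_le' hc ?_)
    intro y hy
    obtain ⟨l, hlL, rfl⟩ := Finset.mem_image.1 hy
    exact hbound l (by simpa only [hL, Finset.mem_filter, Finset.mem_univ, true_and] using hlL)
  -- Main case analysis on whether some good finishes later / earlier under σ.
  set W := Finset.univ.filter (fun j => P j < Q j) with hWdef
  rcases W.eq_empty_or_nonempty with hWe | hWne
  · -- No good finishes later under the manipulation.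
    have hQleP : ∀ j, Q j ≤ P j := by
      intro j
      by_contra hlt
      push_neg at hlt
      have hjW : j ∈ W := by
        simp only [hWdef, Finset.mem_filter, Finset.mem_univ, true_and]; exact hlt
      rw [hWe] at hjW
      exact absurd hjW (Finset.notMem_empty j)
    rcases (Finset.univ.filter (fun j => Q j < P j)).eq_empty_or_nonempty with hW2e | hW2ne
    · -- Exhaustion times agree; then the allocations agree, contradiction.
      have hPQ : Q = P := by
        funext j
        refine le_antisymm (hQleP j) ?_
        by_contra hlt
        push_neg at hlt
        have hjW : j ∈ Finset.univ.filter (fun j => Q j < P j) := by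
          simp only [Finset.mem_filter, Finset.mem_univ, true_and]; exact hlt
        rw [hW2e] at hjW
        exact absurd hjW (Finset.notMem_empty j)
      refine hne ?_
      funext i
      by_cases hiS : i ∈ S
      · by_cases hd : aσ i = aπ i
        · exact hd
        · obtain ⟨k, w, _, _, hwPQ, _⟩ := hFD i hiS hd
          rw [hPQ] at hwPQ
          exact absurd hwPQ (lt_irrefl _)
      · funext j
        rw [hQa i j, hPa i j, hPQ]
        simp only [startTime, hσ i hiS]
    · -- Some good finishes strictly earlier under σ: the coalition must have
      -- rushed it, so some member gains on it, which needs a later-finishing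
      -- good among her favourites — impossible here.
      obtain ⟨x, hxW2, hxmin⟩ :=
        Finset.exists_min_image (Finset.univ.filter (fun j => Q j < P j)) Q hW2ne
      have hQxPx : Q x < P x := by
        simpa only [Finset.mem_filter, Finset.mem_univ, true_and] using hxW2
      have hxmin' : ∀ j, Q j < P j → Q x ≤ Q j := by
        intro j hj
        exact hxmin j (by simp only [Finset.mem_filter, Finset.mem_univ, true_and]; exact hj)
      obtain ⟨i, hiS, hloss⟩ := colLemma q r σ π S hq hr hbig (fun i hi => hσ i hi)
        aσ aπ Q P (fun j => (hQ0 j).1) (fun j => (hP0 j).2) hQa hPa hQq hPq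
        (hAσ.1) (hAπ.1) x hQxPx hxmin'
      have hd : aσ i ≠ aπ i := fun h => absurd (congrFun h x) (ne_of_gt hloss)
      obtain ⟨k, w, _, _, hwPQ, _⟩ := hFD i hiS hd
      exact absurd hwPQ (not_lt.2 (hQleP w))
  · -- Some good finishes strictly later under σ. Take the earliest such `x`
    -- (w.r.t. truthful finishing time): some coalition member loses on it,
    -- yet by hFD she gains earlier, witnessed by a later-finishing good with
    -- a strictly earlier truthful finishing time — contradiction.
    exfalso
    obtain ⟨x, hxW, hxmin⟩ := Finset.exists_min_image W P hWne
    have hPxQx : P x < Q x := by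
      simpa only [hWdef, Finset.mem_filter, Finset.mem_univ, true_and] using hxW
    have hxmin' : ∀ j, P j < Q j → P x ≤ P j := by
      intro j hj
      exact hxmin j (by simp only [hWdef, Finset.mem_filter, Finset.mem_univ, true_and]; exact hj)
    obtain ⟨i, hiS, hloss⟩ := colLemma q r π σ S hq hr hbig (fun i hi => (hσ i hi).symm)
      aπ aσ P Q (fun j => (hP0 j).1) (fun j => (hQ0 j).2) hPa hQa hPq hQq
      (hAπ.1) (hAσ.1) x hPxQx hxmin'
    have hd : aσ i ≠ aπ i := fun h => absurd (congrFun h x) (ne_of_lt hloss)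
    obtain ⟨k, w, hpre, hgain, hwPQ, hcprop⟩ := hFD i hiS hd
    have hkx : k < (π i).symm x := by
      rcases lt_trichotomy k ((π i).symm x) with h | h | h
      · exact h
      · exfalso
        rw [h, Equiv.apply_symm_apply] at hgain
        exact absurd hgain (not_lt.2 hloss.le)
      · exfalso
        have hpx := hpre _ h
        rw [Equiv.apply_symm_apply] at hpx
        exact absurd hpx (ne_of_lt hloss)
    have hπpos : 0 < aπ i x := lt_of_le_of_lt (hAσ.1 i x) hloss
    set A := Finset.univ.filter (fun j' => (π i).symm j' < (π i).symm x) with hA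
    have hs1 : startTime π P i x = A.fold max 0 P := rfl
    have h0 : 0 < max 0 (P x - A.fold max 0 P) := by
      by_contra hmz
      push_neg at hmz
      have hz : max 0 (P x - A.fold max 0 P) = 0 := le_antisymm hmz (le_max_left _ _)
      rw [hPa i x, hs1, hz, mul_zero] at hπpos
      exact lt_irrefl _ hπpos
    have hsub : A.fold max 0 P < P x := by
      by_contra hge
      push_neg at hge
      rw [max_eq_left (by linarith : P x - A.fold max 0 P ≤ 0)] at h0
      exact lt_irrefl _ h0
    have hwle : P w ≤ A.fold max 0 P := by
      refine hcprop _ (zero_le_fold _ _) ?_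
      intro l hl
      refine le_fold_of_mem ?_
      simp only [hA, Finset.mem_filter, Finset.mem_univ, true_and, Equiv.symm_apply_apply]
      exact lt_of_le_of_lt hl hkx
    have hwW : w ∈ W := by
      simp only [hWdef, Finset.mem_filter, Finset.mem_univ, true_and]; exact hwPQ
    exact absurd (hxmin w hwW) (not_le.2 (lt_of_le_of_lt hwle hsub))
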